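/- The element X_n = Σ_{i=1}^n x_{n+1,i}x_{i,n+1} − n of U(gl_{n+1}) commutes with the subalgebra U(gl_n ⊕ gl_1), where gl_n is embedded in the top-left block and gl_1 is spanned by x_{n+1,n+1}. -/

import Mathlib

open UniversalEnvelopingAlgebra

attribute [local instance] LieRing.ofAssociativeRing

variable (F : Type*) [Field F] (n : ℕ)

/-- The image in `U(gl_{n+1})` of the matrix unit `x_{ij}`. -/
noncomputable def xU (i j : Fin (n + 1)) :
    UniversalEnvelopingAlgebra F (Matrix (Fin (n + 1)) (Fin (n + 1)) F) :=
  UniversalEnvelopingAlgebra.ι F (Matrix.single i j (1 : F))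

/-- `X_n = Σ_{i=1}^n x_{n+1,i} x_{i,n+1} − n ∈ U(gl_{n+1})`. -/
noncomputable def Xn :
    UniversalEnvelopingAlgebra F (Matrix (Fin (n + 1)) (Fin (n + 1)) F) :=
  (∑ i : Fin n, xU F n (Fin.last n) i.castSucc * xU F n i.castSucc (Fin.last n)) - (n : _)

section Aux

variable {F : Type*} [Field F] {n : ℕ}

lemma aux_csl (i : Fin n) : (i.castSucc : Fin (n + 1)) ≠ Fin.last n := by
  exact (Fin.castSucc_lt_last i).ne

lemma aux_Emul_apply (i j : Fin (n + 1)) (A : Matrix (Fin (n + 1)) (Fin (n + 1)) F)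
    (p q : Fin (n + 1)) :
    (Matrix.single i j (1 : F) * A) p q = if p = i then A j q else 0 := by
  rcases eq_or_ne p i with rfl | h
  · rw [Matrix.single_mul_apply_same, one_mul, if_pos rfl]
  · rw [Matrix.single_mul_apply_of_ne (h := h), if_neg h]

lemma aux_mulE_apply (i j : Fin (n + 1)) (A : Matrix (Fin (n + 1)) (Fin (n + 1)) F)
    (p q : Fin (n + 1)) :
    (A * Matrix.single i j (1 : F)) p q = if q = j then A p i else 0 := by
  rcases eq_or_ne q j with rfl | h
  · rw [Matrix.mul_single_apply_same, mul_one, if_pos rfl]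
  · rw [Matrix.mul_single_apply_of_ne (hbj := h), if_neg h]

/-- `A * E_{n+1,i} = a • E_{n+1,i}` when the last column of `A` is concentrated in `a`. -/
lemma aux_mul_E1 (A : Matrix (Fin (n + 1)) (Fin (n + 1)) F)
    (hcol : ∀ i : Fin (n + 1), i ≠ Fin.last n → A i (Fin.last n) = 0) (i : Fin n) :
    A * Matrix.single (Fin.last n) i.castSucc (1 : F)
      = A (Fin.last n) (Fin.last n) • Matrix.single (Fin.last n) i.castSucc (1 : F) := by
  ext p q
  rw [aux_mulE_apply]
  simp only [Matrix.smul_apply, Matrix.single, Matrix.of_apply, smul_eq_mul]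
  rcases eq_or_ne q i.castSucc with rfl | hq
  · rcases eq_or_ne p (Fin.last n) with rfl | hp
    · simp
    · rw [if_pos rfl, hcol p hp, if_neg (fun h => hp h.1.symm), mul_zero]
  · rw [if_neg hq, if_neg (fun h => hq h.2.symm), mul_zero]

/-- `E_{i,n+1} * A = a • E_{i,n+1}` when the last row of `A` is concentrated in `a`. -/
lemma aux_E2_mul (A : Matrix (Fin (n + 1)) (Fin (n + 1)) F)
    (hrow : ∀ i : Fin (n + 1), i ≠ Fin.last n → A (Fin.last n) i = 0) (i : Fin n) :
    Matrix.single i.castSucc (Fin.last n) (1 : F) * A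
      = A (Fin.last n) (Fin.last n) • Matrix.single i.castSucc (Fin.last n) (1 : F) := by
  ext p q
  rw [aux_Emul_apply]
  simp only [Matrix.smul_apply, Matrix.single, Matrix.of_apply, smul_eq_mul]
  rcases eq_or_ne p i.castSucc with rfl | hp
  · rcases eq_or_ne q (Fin.last n) with rfl | hq
    · simp
    · rw [if_pos rfl, hrow q hq, if_neg (fun h => hq h.2.symm), mul_zero]
  · rw [if_neg hp, if_neg (fun h => hp h.1.symm), mul_zero]

/-- `E_{n+1,i} * A = Σ_q A_{iq} • E_{n+1,q}`. -/
lemma aux_E1_mul (A : Matrix (Fin (n + 1)) (Fin (n + 1)) F)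
    (hcol : ∀ i : Fin (n + 1), i ≠ Fin.last n → A i (Fin.last n) = 0) (i : Fin n) :
    Matrix.single (Fin.last n) i.castSucc (1 : F) * A
      = ∑ q : Fin n, A i.castSucc q.castSucc •
          Matrix.single (Fin.last n) q.castSucc (1 : F) := by
  ext p r
  rw [aux_Emul_apply]
  simp only [Matrix.sum_apply, Matrix.smul_apply, Matrix.single, Matrix.of_apply,
    smul_eq_mul]
  rcases eq_or_ne p (Fin.last n) with rfl | hp
  · simp only [eq_self_iff_true, if_true, true_and]
    induction r using Fin.lastCases with
    | last =>
      rw [hcol i.castSucc (aux_csl i)]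
      refine (Finset.sum_eq_zero fun q _ => ?_).symm
      rw [if_neg (aux_csl q), mul_zero]
    | cast r =>
      rw [Finset.sum_eq_single r]
      · simp
      · intro q _ hq
        rw [if_neg (by simpa using hq), mul_zero]
      · simp
  · rw [if_neg hp]
    refine (Finset.sum_eq_zero fun q _ => ?_).symm
    rw [if_neg (fun h => hp h.1.symm), mul_zero]

/-- `A * E_{i,n+1} = Σ_p A_{pi} • E_{p,n+1}`. -/
lemma aux_mul_E2 (A : Matrix (Fin (n + 1)) (Fin (n + 1)) F)
    (hrow : ∀ i : Fin (n + 1), i ≠ Fin.last n → A (Fin.last n) i = 0) (i : Fin n) :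
    A * Matrix.single i.castSucc (Fin.last n) (1 : F)
      = ∑ p : Fin n, A p.castSucc i.castSucc •
          Matrix.single p.castSucc (Fin.last n) (1 : F) := by
  ext p r
  rw [aux_mulE_apply]
  simp only [Matrix.sum_apply, Matrix.smul_apply, Matrix.single, Matrix.of_apply,
    smul_eq_mul]
  rcases eq_or_ne r (Fin.last n) with rfl | hr
  · simp only [eq_self_iff_true, if_true, and_true]
    induction p using Fin.lastCases with
    | last =>
      rw [hrow i.castSucc (aux_csl i)]
      refine (Finset.sum_eq_zero fun q _ => ?_).symm
      rw [if_neg (aux_csl q), mul_zero]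
    | cast p =>
      rw [Finset.sum_eq_single p]
      · simp
      · intro q _ hq
        rw [if_neg (by simpa using hq), mul_zero]
      · simp
  · rw [if_neg hr]
    refine (Finset.sum_eq_zero fun q _ => ?_).symm
    rw [if_neg (fun h => hr h.2.symm), mul_zero]

/-- The key algebraic cancellation: if `x` has the right commutators with the families
`u` and `v`, then `x` commutes with `∑ i, u i * v i`. -/
lemma aux_cancel {R : Type*} [Ring R] [Algebra F R]
    (x : R) (u v : Fin n → R) (c : Fin n → Fin n → F) (a : F)
    (h1 : ∀ i, x * u i - u i * x = a • u i - ∑ q : Fin n, c i q • u q)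
    (h2 : ∀ i, x * v i - v i * x = (∑ p : Fin n, c p i • v p) - a • v i) :
    x * (∑ i : Fin n, u i * v i) = (∑ i : Fin n, u i * v i) * x := by
  rw [Finset.mul_sum, Finset.sum_mul, ← sub_eq_zero, ← Finset.sum_sub_distrib]
  have step : ∀ i : Fin n,
      x * (u i * v i) - u i * v i * x
        = (x * u i - u i * x) * v i + u i * (x * v i - v i * x) := by
    intro i; noncomm_ring
  calc ∑ i : Fin n, (x * (u i * v i) - u i * v i * x)
      = ∑ i : Fin n, ((a • u i - ∑ q : Fin n, c i q • u q) * v i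
          + u i * ((∑ p : Fin n, c p i • v p) - a • v i)) := by
        refine Finset.sum_congr rfl fun i _ => ?_
        rw [step i, h1 i, h2 i]
    _ = ∑ i : Fin n, (a • (u i * v i)
          - ∑ q : Fin n, c i q • (u q * v i)
          + ((∑ p : Fin n, c p i • (u i * v p))
          - a • (u i * v i))) := by
        refine Finset.sum_congr rfl fun i _ => ?_
        rw [sub_mul, mul_sub, Finset.sum_mul, Finset.mul_sum]
        simp [smul_mul_assoc, mul_smul_comm]
    _ = 0 := by
        simp only [Finset.sum_add_distrib, Finset.sum_sub_distrib]
        have hcc : ∑ i : Fin n, ∑ p : Fin n, c p i • (u i * v p)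
            = ∑ i : Fin n, ∑ q : Fin n, c i q • (u q * v i) :=
          Finset.sum_comm
        rw [hcc]
        abel

end Aux

/-- `X_n` commutes with `U(gl_n ⊕ gl_1)`: for every matrix `A` that is
block-diagonal with blocks of sizes `n` and `1` (i.e. `A` has zero entries in the last
row and last column off the diagonal), the image of `A` in `U(gl_{n+1})` commutes with
`X_n`. -/
theorem Xn_commutes_with_levi
    (A : Matrix (Fin (n + 1)) (Fin (n + 1)) F)
    (hrow : ∀ i : Fin (n + 1), i ≠ Fin.last n → A (Fin.last n) i = 0)
    (hcol : ∀ i : Fin (n + 1), i ≠ Fin.last n → A i (Fin.last n) = 0) :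
    UniversalEnvelopingAlgebra.ι F A * Xn F n = Xn F n * UniversalEnvelopingAlgebra.ι F A := by
  have hcomm : ∀ B C : Matrix (Fin (n + 1)) (Fin (n + 1)) F,
      ι F B * ι F C - ι F C * ι F B = ι F (B * C - C * B) := by
    intro B C
    have h := (ι F (L := Matrix (Fin (n + 1)) (Fin (n + 1)) F)).map_lie B C
    rw [Ring.lie_def, Ring.lie_def] at h
    exact h.symm
  have hsum : ∀ g : Fin n → Matrix (Fin (n + 1)) (Fin (n + 1)) F,
      ι F (∑ q : Fin n, g q) = ∑ q : Fin n, ι F (g q) := by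
    intro g
    have := map_sum ((ι F : Matrix (Fin (n + 1)) (Fin (n + 1)) F →ₗ⁅F⁆
      UniversalEnvelopingAlgebra F (Matrix (Fin (n + 1)) (Fin (n + 1)) F)) :
      Matrix (Fin (n + 1)) (Fin (n + 1)) F →ₗ[F]
      UniversalEnvelopingAlgebra F (Matrix (Fin (n + 1)) (Fin (n + 1)) F)) g Finset.univ
    simp only [LieHom.coe_toLinearMap] at this
    exact this
  have h1 : ∀ i : Fin n,
      ι F A * xU F n (Fin.last n) i.castSucc - xU F n (Fin.last n) i.castSucc * ι F A
        = A (Fin.last n) (Fin.last n) • xU F n (Fin.last n) i.castSucc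
          - ∑ q : Fin n, A i.castSucc q.castSucc • xU F n (Fin.last n) q.castSucc := by
    intro i
    simp only [xU]
    rw [hcomm, aux_mul_E1 A hcol i, aux_E1_mul A hcol i, map_sub, map_smul, hsum]
    simp only [map_smul]
  have h2 : ∀ i : Fin n,
      ι F A * xU F n i.castSucc (Fin.last n) - xU F n i.castSucc (Fin.last n) * ι F A
        = (∑ p : Fin n, A p.castSucc i.castSucc • xU F n p.castSucc (Fin.last n))
          - A (Fin.last n) (Fin.last n) • xU F n i.castSucc (Fin.last n) := by
    intro i
    simp only [xU]
    rw [hcomm, aux_mul_E2 A hrow i, aux_E2_mul A hrow i, map_sub, hsum, map_smul]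
    simp only [map_smul]
  have hS := aux_cancel (ι F A)
    (fun i => xU F n (Fin.last n) i.castSucc)
    (fun i => xU F n i.castSucc (Fin.last n))
    (fun i q => A i.castSucc q.castSucc) (A (Fin.last n) (Fin.last n)) h1 h2
  rw [Xn, mul_sub, sub_mul, hS, (Nat.cast_commute n (ι F A)).eq]
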